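/- Let m_P, m_Q ∈ ℝ with m_P ≠ m_Q and σ_P, σ_Q ≥ 0. Set a := m_P − m_Q, b := σ_Q² − σ_P², v := (1/(2|a|))√(b² + 2a²(σ_P² + σ_Q²) + a⁴), r := 1/2 + (b + a²)/(4av), s := 1/2 + (b − a²)/(4av), u₁ := m_P + √((1−r)σ_P²/r), u₂ := m_P − √(r σ_P²/(1−r)) (when 0 < r < 1). Define probability measures P, Q on the two-point set {u₁, u₂} by P(u₁) = r, P(u₂) = 1−r, Q(u₁) = s, Q(u₂) = 1−s. Then P has mean m_P and variance σ_P², Q has mean m_Q and variance σ_Q², and H²(P,Q) = 1 − √(1 − a²/(a² + (σ_P + σ_Q)²)); in particular the lower bound 1 − √(1 − a²/(a² + (σ_P + σ_Q)²)) on the squared Hellinger distance over all pairs with these means and variances is attained. -/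

import Mathlib

open MeasureTheory Real

/-- The squared Hellinger distance `H²(P,Q) = (1/2)∫(√p − √q)² dμ`, computed with
respect to the dominating measure `μ = P + Q`. -/
noncomputable def hellingerSq (P Q : Measure ℝ) : ℝ :=
  (1 / 2) * ∫ x, (Real.sqrt ((P.rnDeriv (P + Q)) x).toReal
      - Real.sqrt ((Q.rnDeriv (P + Q)) x).toReal) ^ 2 ∂(P + Q)

/-- The probability measure on the two-point set `{u₁, u₂}` assigning mass `r` to `u₁`
and `1 - r` to `u₂`. -/
noncomputable def twoPoint (u₁ u₂ r : ℝ) : Measure ℝ :=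
  ENNReal.ofReal r • Measure.dirac u₁ + ENNReal.ofReal (1 - r) • Measure.dirac u₂

open ENNReal

lemma int_dirac {f : ℝ → ℝ} (hf : Measurable f) (u : ℝ) : Integrable f (Measure.dirac u) := by
  refine ⟨hf.aestronglyMeasurable, ?_⟩
  rw [HasFiniteIntegral, lintegral_dirac]
  exact ENNReal.coe_lt_top

lemma integral_two_dirac {f : ℝ → ℝ} (hf : Measurable f) (u₁ u₂ c d : ℝ)
    (hc : 0 ≤ c) (hd : 0 ≤ d) :
    ∫ x, f x ∂(ENNReal.ofReal c • Measure.dirac u₁ + ENNReal.ofReal d • Measure.dirac u₂)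
      = c * f u₁ + d * f u₂ := by
  rw [integral_add_measure ((int_dirac hf u₁).smul_measure ENNReal.ofReal_ne_top)
    ((int_dirac hf u₂).smul_measure ENNReal.ofReal_ne_top),
    integral_smul_measure, integral_smul_measure, integral_dirac, integral_dirac,
    ENNReal.toReal_ofReal hc, ENNReal.toReal_ofReal hd, smul_eq_mul, smul_eq_mul]

lemma withDensity_dirac {f : ℝ → ℝ≥0∞} (u : ℝ) :
    (Measure.dirac u).withDensity f = f u • Measure.dirac u := by
  classical
  ext s hs
  rw [withDensity_apply _ hs, setLIntegral_dirac f s, Measure.smul_apply,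
    Measure.dirac_apply' _ hs, smul_eq_mul]
  by_cases h : u ∈ s
  · simp [h, Set.indicator_of_mem]
  · simp [h]

lemma twoPoint_add (u₁ u₂ r s : ℝ) (hr0 : 0 ≤ r) (hr1 : r ≤ 1) (hs0 : 0 ≤ s) (hs1 : s ≤ 1) :
    twoPoint u₁ u₂ r + twoPoint u₁ u₂ s
      = ENNReal.ofReal (r + s) • Measure.dirac u₁
        + ENNReal.ofReal (2 - r - s) • Measure.dirac u₂ := by
  unfold twoPoint
  rw [ENNReal.ofReal_add hr0 hs0, show (2:ℝ) - r - s = (1 - r) + (1 - s) by ring,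
    ENNReal.ofReal_add (by linarith) (by linarith), add_smul, add_smul]
  abel

lemma twoPoint_eq_withDensity (u₁ u₂ : ℝ) (hu : u₂ ≠ u₁) (r s : ℝ)
    (hr0 : 0 ≤ r) (hr1 : r ≤ 1) (hs0 : 0 ≤ s) (hs1 : s ≤ 1)
    (hT : 0 < r + s) (hT2 : 0 < 2 - r - s) :
    twoPoint u₁ u₂ r = (twoPoint u₁ u₂ r + twoPoint u₁ u₂ s).withDensity
      (fun x => if x = u₁ then ENNReal.ofReal (r / (r + s))
        else ENNReal.ofReal ((1 - r) / (2 - r - s))) := by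
  classical
  rw [twoPoint_add u₁ u₂ r s hr0 hr1 hs0 hs1, withDensity_add_measure,
    withDensity_smul_measure, withDensity_smul_measure, withDensity_dirac, withDensity_dirac,
    if_pos rfl, if_neg hu, smul_smul, smul_smul,
    ← ENNReal.ofReal_mul (by linarith), ← ENNReal.ofReal_mul (by linarith)]
  unfold twoPoint
  rw [show (r + s) * (r / (r + s)) = r by field_simp,
    show (2 - r - s) * ((1 - r) / (2 - r - s)) = 1 - r by field_simp]

instance twoPoint_finite (u₁ u₂ r : ℝ) : IsFiniteMeasure (twoPoint u₁ u₂ r) := by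
  constructor
  unfold twoPoint
  simp only [Measure.add_apply, Measure.smul_apply, Measure.dirac_apply, smul_eq_mul]
  simp [lt_top_iff_ne_top]

lemma T_half (r s T : ℝ) (hr : 0 ≤ r) (hs : 0 ≤ s) (hT : 0 < T) :
    T * (Real.sqrt (r/T) - Real.sqrt (s/T))^2 = r + s - 2 * Real.sqrt (r*s) := by
  have h1 : Real.sqrt (r/T) * Real.sqrt (s/T) = Real.sqrt (r*s) / T := by
    rw [← Real.sqrt_mul (by positivity), show r/T*(s/T) = (r*s)/T^2 by ring,
      Real.sqrt_div (by positivity), Real.sqrt_sq hT.le]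
  rw [sub_sq, Real.sq_sqrt (by positivity), Real.sq_sqrt (by positivity), mul_assoc, h1]
  field_simp
  ring

set_option maxHeartbeats 1000000 in
lemma hellingerSq_twoPoint (u₁ u₂ : ℝ) (hu : u₂ ≠ u₁) (r s : ℝ)
    (hr0 : 0 < r) (hr1 : r < 1) (hs0 : 0 ≤ s) (hs1 : s ≤ 1) :
    hellingerSq (twoPoint u₁ u₂ r) (twoPoint u₁ u₂ s)
      = 1 - Real.sqrt (r * s) - Real.sqrt ((1 - r) * (1 - s)) := by
  classical
  set P := twoPoint u₁ u₂ r with hP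
  set Q := twoPoint u₁ u₂ s with hQ
  have hT : 0 < r + s := by linarith
  have hT2 : 0 < 2 - r - s := by linarith
  set f : ℝ → ℝ≥0∞ := fun x => if x = u₁ then ENNReal.ofReal (r / (r + s))
      else ENNReal.ofReal ((1 - r) / (2 - r - s)) with hfdef
  set g : ℝ → ℝ≥0∞ := fun x => if x = u₁ then ENNReal.ofReal (s / (r + s))
      else ENNReal.ofReal ((1 - s) / (2 - r - s)) with hgdef
  have hfm : Measurable f := Measurable.ite (measurableSet_eq) measurable_const measurable_const
  have hgm : Measurable g := Measurable.ite (measurableSet_eq) measurable_const measurable_const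
  have hPrep : P = (P + Q).withDensity f :=
    twoPoint_eq_withDensity u₁ u₂ hu r s hr0.le hr1.le hs0 hs1 hT hT2
  have hQrep : Q = (P + Q).withDensity g := by
    have h := twoPoint_eq_withDensity u₁ u₂ hu s r hs0 hs1 hr0.le hr1.le (by linarith) (by linarith)
    rw [show twoPoint u₁ u₂ s + twoPoint u₁ u₂ r = twoPoint u₁ u₂ r + twoPoint u₁ u₂ s
        from add_comm _ _, show s + r = r + s from add_comm s r,
      show (2:ℝ) - s - r = 2 - r - s by ring] at h
    exact h
  have hfP : P.rnDeriv (P + Q) =ᵐ[P + Q] f := by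
    have h := Measure.rnDeriv_withDensity (P + Q) hfm
    rw [← hPrep] at h
    exact h
  have hgQ : Q.rnDeriv (P + Q) =ᵐ[P + Q] g := by
    have h := Measure.rnDeriv_withDensity (P + Q) hgm
    rw [← hQrep] at h
    exact h
  set G : ℝ → ℝ := fun x => if x = u₁ then
      (Real.sqrt (r / (r + s)) - Real.sqrt (s / (r + s)))^2
    else (Real.sqrt ((1 - r) / (2 - r - s)) - Real.sqrt ((1 - s) / (2 - r - s)))^2 with hGdef
  have hGm : Measurable G := Measurable.ite (measurableSet_eq) measurable_const measurable_const
  have hae : (fun x => (Real.sqrt ((P.rnDeriv (P + Q)) x).toReal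
      - Real.sqrt ((Q.rnDeriv (P + Q)) x).toReal) ^ 2) =ᵐ[P + Q] G := by
    filter_upwards [hfP, hgQ] with x h1 h2
    rw [h1, h2, hfdef, hgdef, hGdef]
    by_cases hx : x = u₁ <;>
      simp only [hx, if_pos, if_neg, if_true, if_false] <;>
      rw [ENNReal.toReal_ofReal (div_nonneg (by linarith) (by linarith)), ENNReal.toReal_ofReal (div_nonneg (by linarith) (by linarith))]
  rw [hellingerSq, integral_congr_ae hae, hP, hQ,
    twoPoint_add u₁ u₂ r s hr0.le hr1.le hs0 hs1,
    integral_two_dirac hGm u₁ u₂ _ _ (by linarith) (by linarith)]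
  have hG1 : G u₁ = (Real.sqrt (r / (r + s)) - Real.sqrt (s / (r + s)))^2 := if_pos rfl
  have hG2 : G u₂ = (Real.sqrt ((1 - r) / (2 - r - s)) - Real.sqrt ((1 - s) / (2 - r - s)))^2 :=
    if_neg hu
  rw [hG1, hG2]
  have e1 := T_half r s (r+s) hr0.le hs0 hT
  have e2 := T_half (1-r) (1-s) (2-r-s) (by linarith) (by linarith) hT2
  rw [show (2:ℝ) - r - s = (2-r-s) by ring] at e2
  nlinarith [e1, e2]

lemma key_sqrt (a b σP σQ w : ℝ) (ha : a ≠ 0) (hσP : 0 ≤ σP) (hσQ : 0 ≤ σQ)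
    (hb : b = σQ^2 - σP^2)
    (hw : w = Real.sqrt (b^2 + 2*a^2*(σP^2+σQ^2) + a^4)) :
    Real.sqrt (((w+b)^2 - a^4)/(4*w^2)) + Real.sqrt (((w-b)^2 - a^4)/(4*w^2))
      = Real.sqrt (1 - a^2/(a^2+(σP+σQ)^2)) := by
  have ha2 : 0 < a^2 := by positivity
  set K := a^2 + (σP+σQ)^2 with hK
  set L := a^2 + (σP-σQ)^2 with hL
  have hKpos : 0 < K := by positivity
  have hLpos : 0 < L := by positivity
  have hKL : K * L = b^2 + 2*a^2*(σP^2+σQ^2) + a^4 := by rw [hK, hL, hb]; ring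
  set sK := Real.sqrt K with hsK
  set sL := Real.sqrt L with hsL
  have hsK2 : sK^2 = K := Real.sq_sqrt hKpos.le
  have hsL2 : sL^2 = L := Real.sq_sqrt hLpos.le
  have hsKpos : 0 < sK := Real.sqrt_pos.2 hKpos
  have hsLpos : 0 < sL := Real.sqrt_pos.2 hLpos
  have hwKL : w = sK * sL := by
    rw [hw, ← hKL, Real.sqrt_mul hKpos.le, hsK, hsL]
  have hw0 : 0 < w := by rw [hwKL]; positivity
  set M := (σP+σQ)*sL + (σQ-σP)*sK with hM
  set N := (σP+σQ)*sL - (σQ-σP)*sK with hN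
  have hMsq : (w+b)^2 - a^4 = M^2 := by
    rw [hwKL, hM, hb]
    linear_combination (sL^2 - (σQ-σP)^2) * hsK2 + (K - (σP+σQ)^2) * hsL2
  have hNsq : (w-b)^2 - a^4 = N^2 := by
    rw [hwKL, hN, hb]
    linear_combination (sL^2 - (σQ-σP)^2) * hsK2 + (K - (σP+σQ)^2) * hsL2
  have hprod : 0 ≤ a^2*σP*σQ := by positivity
  have hXY : ((σP-σQ)*sK)^2 ≤ ((σP+σQ)*sL)^2 := by
    rw [mul_pow, mul_pow, hsK2, hsL2, hK, hL]
    nlinarith [hprod]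
  have hXY' : ((σQ-σP)*sK)^2 ≤ ((σP+σQ)*sL)^2 := by
    rw [show ((σQ-σP)*sK)^2 = ((σP-σQ)*sK)^2 by ring]; exact hXY
  have habs := abs_le_of_sq_le_sq' hXY' (mul_nonneg (add_nonneg hσP hσQ) hsLpos.le)
  have hM0 : 0 ≤ M := by rw [hM]; linarith [habs.1]
  have hN0 : 0 ≤ N := by rw [hN]; linarith [habs.2]
  have e1 : ((w+b)^2 - a^4)/(4*w^2) = (M/(2*w))^2 := by
    rw [hMsq, div_pow]; congr 1; ring
  have e2 : ((w-b)^2 - a^4)/(4*w^2) = (N/(2*w))^2 := by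
    rw [hNsq, div_pow]; congr 1; ring
  rw [e1, e2, Real.sqrt_sq (div_nonneg hM0 (by positivity)),
    Real.sqrt_sq (div_nonneg hN0 (by positivity))]
  have e3 : 1 - a^2/K = (σP+σQ)^2/K := by field_simp; rw [hK]; ring
  rw [e3, Real.sqrt_div (sq_nonneg _), Real.sqrt_sq (by linarith), ← hsK]
  rw [hM, hN, hwKL]
  field_simp
  ring


lemma sq_cancel {x y : ℝ} (hx : 0 ≤ x) (hy : 0 ≤ y) (h : x^2 = y^2) : x = y := by
  rw [← Real.sqrt_sq hx, h, Real.sqrt_sq hy]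

set_option maxHeartbeats 1000000 in
theorem hellinger_lower_bound_attained
    (mP mQ σP σQ : ℝ) (hne : mP ≠ mQ) (hσP : 0 ≤ σP) (hσQ : 0 ≤ σQ)
    (a b v r s u₁ u₂ : ℝ)
    (ha : a = mP - mQ) (hb : b = σQ ^ 2 - σP ^ 2)
    (hv : v = (1 / (2 * |a|)) *
      Real.sqrt (b ^ 2 + 2 * a ^ 2 * (σP ^ 2 + σQ ^ 2) + a ^ 4))
    (hr : r = 1 / 2 + (b + a ^ 2) / (4 * a * v))
    (hs : s = 1 / 2 + (b - a ^ 2) / (4 * a * v))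
    (hr0 : 0 < r) (hr1 : r < 1)
    (hu₁ : u₁ = mP + Real.sqrt ((1 - r) * σP ^ 2 / r))
    (hu₂ : u₂ = mP - Real.sqrt (r * σP ^ 2 / (1 - r))) :
    (∫ x, x ∂(twoPoint u₁ u₂ r) = mP) ∧
    (∫ x, x ^ 2 ∂(twoPoint u₁ u₂ r)) - mP ^ 2 = σP ^ 2 ∧
    (∫ x, x ∂(twoPoint u₁ u₂ s) = mQ) ∧
    (∫ x, x ^ 2 ∂(twoPoint u₁ u₂ s)) - mQ ^ 2 = σQ ^ 2 ∧
    hellingerSq (twoPoint u₁ u₂ r) (twoPoint u₁ u₂ s) =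
      1 - Real.sqrt (1 - a ^ 2 / (a ^ 2 + (σP + σQ) ^ 2)) := by
  have ha0 : a ≠ 0 := by rw [ha]; exact sub_ne_zero.2 hne
  have ha2 : 0 < a ^ 2 := by positivity
  have hDpos : 0 < b ^ 2 + 2 * a ^ 2 * (σP ^ 2 + σQ ^ 2) + a ^ 4 := by positivity
  set w := Real.sqrt (b ^ 2 + 2 * a ^ 2 * (σP ^ 2 + σQ ^ 2) + a ^ 4) with hwdef
  have hw2 : w ^ 2 = b ^ 2 + 2 * a ^ 2 * (σP ^ 2 + σQ ^ 2) + a ^ 4 := Real.sq_sqrt hDpos.le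
  have hw0 : 0 < w := Real.sqrt_pos.2 hDpos
  clear_value w
  have habs : 0 < |a| := abs_pos.2 ha0
  have h2av : 2 * |a| * v = w := by rw [hv]; field_simp
  have hvpos : 0 < v := by nlinarith [h2av, mul_pos habs hw0]
  have hv0 : v ≠ 0 := ne_of_gt hvpos
  have hv2 : 4 * a ^ 2 * v ^ 2 = b ^ 2 + 2 * a ^ 2 * (σP ^ 2 + σQ ^ 2) + a ^ 4 := by
    linear_combination (2 * |a| * v + w) * h2av + hw2 - 4 * v ^ 2 * (sq_abs a)
  have F1 : r * (1 - r) = σP ^ 2 / (4 * v ^ 2) := by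
    rw [hr]; field_simp
    linear_combination 4 * hv2 - 8 * a ^ 2 * hb
  have F2 : s * (1 - s) = σQ ^ 2 / (4 * v ^ 2) := by
    rw [hs]; field_simp
    linear_combination 4 * hv2 + 8 * a ^ 2 * hb
  have hσP2 : 0 < σP ^ 2 := by
    have h1 : 0 < r * (1 - r) := mul_pos hr0 (by linarith)
    rw [F1] at h1
    have h2 := mul_pos h1 (show (0:ℝ) < 4 * v ^ 2 by positivity)
    rwa [div_mul_cancel₀ _ (show (4:ℝ) * v ^ 2 ≠ 0 by positivity)] at h2
  have hσPpos : 0 < σP := by nlinarith [hσP2, hσP]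
  have hss : 0 ≤ s * (1 - s) := by rw [F2]; positivity
  have hs0 : 0 ≤ s := by nlinarith [hss, sq_nonneg s]
  have hs1 : s ≤ 1 := by nlinarith [hss, sq_nonneg (s - 1)]
  set A := Real.sqrt ((1 - r) * σP ^ 2 / r) with hAdef
  set B := Real.sqrt (r * σP ^ 2 / (1 - r)) with hBdef
  have hA2 : A ^ 2 = (1 - r) * σP ^ 2 / r :=
    Real.sq_sqrt (div_nonneg (mul_nonneg (by linarith) (sq_nonneg σP)) hr0.le)
  have hB2 : B ^ 2 = r * σP ^ 2 / (1 - r) :=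
    Real.sq_sqrt (div_nonneg (mul_nonneg hr0.le (sq_nonneg σP)) (by linarith))
  have hA0 : 0 ≤ A := Real.sqrt_nonneg _
  have hB0 : 0 < B :=
    Real.sqrt_pos.2 (div_pos (mul_pos hr0 (pow_pos hσPpos 2)) (by linarith))
  clear_value A B
  have huneq : u₂ ≠ u₁ := by rw [hu₁, hu₂]; intro h; nlinarith
  have hrA2 : r * A ^ 2 = (1 - r) * σP ^ 2 := by
    rw [hA2, mul_comm r _, div_mul_cancel₀ _ (ne_of_gt hr0)]
  have h1B2 : (1 - r) * B ^ 2 = r * σP ^ 2 := by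
    rw [hB2, mul_comm (1 - r) _, div_mul_cancel₀ _ (show (1:ℝ) - r ≠ 0 by linarith)]
  have hrA : r * A = σP ^ 2 / (2 * v) := by
    apply sq_cancel (mul_nonneg hr0.le hA0) (div_nonneg (sq_nonneg σP) (by linarith))
    rw [mul_pow]
    calc r ^ 2 * A ^ 2 = r * (r * A ^ 2) := by ring
      _ = (r * (1 - r)) * σP ^ 2 := by rw [hrA2]; ring
      _ = (σP ^ 2 / (2 * v)) ^ 2 := by rw [F1]; field_simp; ring
  have h1B : (1 - r) * B = σP ^ 2 / (2 * v) := by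
    apply sq_cancel (mul_nonneg (by linarith) hB0.le) (div_nonneg (sq_nonneg σP) (by linarith))
    rw [mul_pow]
    calc (1 - r) ^ 2 * B ^ 2 = (1 - r) * ((1 - r) * B ^ 2) := by ring
      _ = (r * (1 - r)) * σP ^ 2 := by rw [h1B2]; ring
      _ = (σP ^ 2 / (2 * v)) ^ 2 := by rw [F1]; field_simp; ring
  have hsr : s - r = -(a / (2 * v)) := by
    rw [hr, hs]; field_simp; ring
  have hrr1 : r * (1 - r) ≠ 0 := ne_of_gt (mul_pos hr0 (by linarith))
  have key3 : s * A - (1 - s) * B = -a := by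
    apply mul_left_cancel₀ hrr1
    calc r * (1 - r) * (s * A - (1 - s) * B)
        = (σP ^ 2 / (2 * v)) * (s - r) := by
          linear_combination (s * (1 - r)) * hrA - ((1 - s) * r) * h1B
      _ = r * (1 - r) * -a := by rw [hsr, F1]; field_simp; ring
  have e5 : 4 * v ^ 2 * (s * (1 - r) ^ 2 + (1 - s) * r ^ 2) = a ^ 2 + b + σP ^ 2 := by
    rw [hr, hs]; field_simp
    linear_combination 32 * a * v * hv2 - 64 * a ^ 3 * v * hb
  have key4 : s * A ^ 2 + (1 - s) * B ^ 2 = a ^ 2 + b + σP ^ 2 := by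
    apply mul_left_cancel₀ hrr1
    calc r * (1 - r) * (s * A ^ 2 + (1 - s) * B ^ 2)
        = σP ^ 2 * (s * (1 - r) ^ 2 + (1 - s) * r ^ 2) := by
          linear_combination ((1 - r) * s) * hrA2 + (r * (1 - s)) * h1B2
      _ = r * (1 - r) * (a ^ 2 + b + σP ^ 2) := by
          rw [F1, ← e5]; field_simp
  refine ⟨?_, ?_, ?_, ?_, ?_⟩
  · unfold twoPoint
    rw [integral_two_dirac (f := fun x => x) measurable_id u₁ u₂ r (1 - r) hr0.le (by linarith)]
    rw [hu₁, hu₂]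
    linear_combination hrA - h1B
  · unfold twoPoint
    rw [integral_two_dirac (f := fun x => x ^ 2) (measurable_id.pow_const 2) u₁ u₂ r (1 - r) hr0.le (by linarith)]
    rw [hu₁, hu₂]
    linear_combination hrA2 + h1B2 + (2 * mP) * hrA - (2 * mP) * h1B
  · unfold twoPoint
    rw [integral_two_dirac (f := fun x => x) measurable_id u₁ u₂ s (1 - s) hs0 (by linarith)]
    rw [hu₁, hu₂]
    linear_combination key3 - ha
  · unfold twoPoint
    rw [integral_two_dirac (f := fun x => x ^ 2) (measurable_id.pow_const 2) u₁ u₂ s (1 - s) hs0 (by linarith)]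
    rw [hu₁, hu₂]
    linear_combination key4 + (2 * mP) * key3 + hb + (2 * mP - a - mQ - mP) * ha + (2 * a - 2 * mP) * ha
  · rw [hellingerSq_twoPoint u₁ u₂ huneq r s hr0 hr1 hs0 hs1]
    have hkey := key_sqrt a b σP σQ w ha0 hσP hσQ hb hwdef
    rcases lt_or_gt_of_ne ha0 with hneg | hpos
    · have hveq : v = w / (2 * -a) := by
        rw [hv, abs_of_neg hneg]; ring
      have hrs : r * s = ((w - b) ^ 2 - a ^ 4) / (4 * w ^ 2) := by
        rw [hr, hs, hveq]; field_simp; ring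
      have h1rs : (1 - r) * (1 - s) = ((w + b) ^ 2 - a ^ 4) / (4 * w ^ 2) := by
        rw [hr, hs, hveq]; field_simp; ring
      rw [hrs, h1rs]
      linarith [hkey]
    · have hveq : v = w / (2 * a) := by
        rw [hv, abs_of_pos hpos]; ring
      have hrs : r * s = ((w + b) ^ 2 - a ^ 4) / (4 * w ^ 2) := by
        rw [hr, hs, hveq]; field_simp; ring
      have h1rs : (1 - r) * (1 - s) = ((w - b) ^ 2 - a ^ 4) / (4 * w ^ 2) := by
        rw [hr, hs, hveq]; field_simp; ring
      rw [hrs, h1rs]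
      linarith [hkey]
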